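/- Let 0 < a < r, R > a, D > 0 and t > 0, and define erfc(x) = (2/√π)·∫_{x}^{∞} exp(−u²) du and cₙ = (a/R)ⁿ·erfc((r − a + n·(R − a))/√(4·D·t)). Then the alternating series ∑_{n=0}^{∞} (−1)ⁿ·cₙ is absolutely summable and its sum S satisfies 0 ≤ S ≤ erfc((r − a)/√(4·D·t)). Consequently the symmetric 2-FAR hitting probability p₁(t) = (a/r)·S satisfies p₁(t) ≤ p̄(t,r) = (a/r)·erfc((r − a)/√(4·D·t)), and the array gain g(t) = 2·p₁(t)/p̄(t,r) satisfies g(t) ≤ 2. -/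
import Mathlib

/-- The complementary error function `erfc(x) = (2/√π)·∫_{x}^{∞} exp(−u²) du`. -/
noncomputable def erfc (x : ℝ) : ℝ :=
  2 / Real.sqrt Real.pi * ∫ u in Set.Ioi x, Real.exp (-u ^ 2)

lemma erfc_nonneg (x : ℝ) : 0 ≤ erfc x := by
  unfold erfc
  apply mul_nonneg
  · positivity
  · exact MeasureTheory.setIntegral_nonneg measurableSet_Ioi
      (fun u _ => (Real.exp_pos _).le)

lemma erfc_anti : Antitone erfc := by
  intro x y hxy
  unfold erfc
  apply mul_le_mul_of_nonneg_left _ (by positivity)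
  apply MeasureTheory.setIntegral_mono_set
  · have h : MeasureTheory.Integrable (fun u : ℝ => Real.exp (-u ^ 2)) := by
      have := integrable_exp_neg_mul_sq (b := 1) one_pos
      simpa using this
    exact h.integrableOn
  · exact Filter.Eventually.of_forall (fun u => (Real.exp_pos _).le)
  · exact Filter.Eventually.of_forall (fun u hu => lt_of_le_of_lt hxy hu)

/-- The symmetric 2-FAR hitting probability (equation UCA2) is a nonnegative
alternating series never exceeding the single-FAR hitting probability, so the
array gain `g(t) = 2·p₁(t)/p̄(t,r)` is at most `2`. -/
theorem stmt16 (a r R D t : ℝ) (ha : 0 < a) (har : a < r) (hR : a < R)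
    (hD : 0 < D) (ht : 0 < t) :
    Summable (fun n : ℕ =>
      |(-1 : ℝ) ^ n * ((a / R) ^ n *
        erfc ((r - a + n * (R - a)) / Real.sqrt (4 * D * t)))|) ∧
    0 ≤ (∑' n : ℕ, (-1 : ℝ) ^ n * ((a / R) ^ n *
        erfc ((r - a + n * (R - a)) / Real.sqrt (4 * D * t)))) ∧
    (∑' n : ℕ, (-1 : ℝ) ^ n * ((a / R) ^ n *
        erfc ((r - a + n * (R - a)) / Real.sqrt (4 * D * t)))) ≤
      erfc ((r - a) / Real.sqrt (4 * D * t)) ∧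
    a / r * (∑' n : ℕ, (-1 : ℝ) ^ n * ((a / R) ^ n *
        erfc ((r - a + n * (R - a)) / Real.sqrt (4 * D * t)))) ≤
      a / r * erfc ((r - a) / Real.sqrt (4 * D * t)) ∧
    2 * (a / r * (∑' n : ℕ, (-1 : ℝ) ^ n * ((a / R) ^ n *
        erfc ((r - a + n * (R - a)) / Real.sqrt (4 * D * t))))) /
      (a / r * erfc ((r - a) / Real.sqrt (4 * D * t))) ≤ 2 := by
  set s := Real.sqrt (4 * D * t) with hs
  have hs0 : 0 < s := Real.sqrt_pos.mpr (by positivity)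
  set x := a / R with hxdef
  have hx0 : 0 ≤ x := le_of_lt (by rw [hxdef]; exact div_pos ha (ha.trans hR))
  have hx1 : x < 1 := (div_lt_one (lt_trans ha hR)).mpr hR
  set e : ℕ → ℝ := fun n => erfc ((r - a + n * (R - a)) / s) with he
  set c : ℕ → ℝ := fun n => x ^ n * e n with hc
  set f : ℕ → ℝ := fun n => (-1 : ℝ) ^ n * (x ^ n * e n) with hf
  have he_nonneg : ∀ n, 0 ≤ e n := fun n => erfc_nonneg _
  have hc_nonneg : ∀ n, 0 ≤ c n := fun n => mul_nonneg (pow_nonneg hx0 n) (he_nonneg n)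
  have hRa : 0 < R - a := sub_pos.mpr hR
  have he_anti : ∀ m n, m ≤ n → e n ≤ e m := by
    intro m n hmn
    apply erfc_anti
    have hmn' : (m : ℝ) ≤ n := Nat.cast_le.mpr hmn
    have h2 : r - a + (m : ℝ) * (R - a) ≤ r - a + (n : ℝ) * (R - a) := by nlinarith
    exact (div_le_div_iff_of_pos_right hs0).mpr h2
  have hc_anti : ∀ m n, m ≤ n → c n ≤ c m := by
    intro m n hmn
    exact mul_le_mul (pow_le_pow_of_le_one hx0 hx1.le hmn)
      (he_anti m n hmn) (he_nonneg n) (pow_nonneg hx0 m)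
  -- summability
  have habs : ∀ n, |f n| = c n := by
    intro n
    simp only [hf, hc, abs_mul, abs_pow, abs_neg, abs_one, one_pow, one_mul]
    rw [abs_of_nonneg hx0, abs_of_nonneg (he_nonneg n)]
  have hsum_c : Summable c := by
    apply Summable.of_nonneg_of_le hc_nonneg (fun n => ?_)
      (((summable_geometric_of_lt_one hx0 hx1)).mul_left (e 0))
    calc c n = x ^ n * e n := rfl
      _ ≤ x ^ n * e 0 := by
          exact mul_le_mul_of_nonneg_left (he_anti 0 n (Nat.zero_le n)) (pow_nonneg hx0 n)
      _ = e 0 * x ^ n := mul_comm _ _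
  have hsum_abs : Summable (fun n => |f n|) := by
    simpa only [habs] using hsum_c
  have hsum_f : Summable f := hsum_abs.of_abs
  -- identify subsequences
  have hfe : ∀ k, f (2 * k) = c (2 * k) := by
    intro k
    have h1 : ((-1 : ℝ)) ^ (2 * k) = 1 := Even.neg_one_pow ⟨k, by ring⟩
    simp only [hf, hc, h1, one_mul]
  have hfo : ∀ k, f (2 * k + 1) = -c (2 * k + 1) := by
    intro k
    have h1 : ((-1 : ℝ)) ^ (2 * k + 1) = -1 := Odd.neg_one_pow ⟨k, by ring⟩
    simp only [hf, hc, h1, neg_mul, one_mul]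
  -- nonnegativity of the sum
  have hse : Summable (fun k => f (2 * k)) :=
    hsum_f.comp_injective (fun i j h => by omega)
  have hso : Summable (fun k => f (2 * k + 1)) :=
    hsum_f.comp_injective (fun i j h => by omega)
  have hsplit : (∑' k, f (2 * k)) + ∑' k, f (2 * k + 1) = ∑' n, f n :=
    tsum_even_add_odd hse hso
  have hS_nonneg : 0 ≤ ∑' n, f n := by
    rw [← hsplit, ← Summable.tsum_add hse hso]
    apply tsum_nonneg
    intro k
    have := hc_anti (2 * k) (2 * k + 1) (by omega)
    rw [hfe, hfo]
    linarith
  have hS_le : (∑' n, f n) ≤ e 0 := by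
    have h0 : ∑' n, f n = f 0 + ∑' k, f (k + 1) := Summable.tsum_eq_zero_add hsum_f
    have hf0 : f 0 = e 0 := by simp [hf]
    have htail : (∑' k, f (k + 1)) ≤ 0 := by
      set g : ℕ → ℝ := fun k => f (k + 1) with hg
      have hsg : Summable g := by
        apply hsum_f.comp_injective (fun i j h => by omega)
      have hge : Summable (fun k => g (2 * k)) :=
        hsg.comp_injective (fun i j h => by omega)
      have hgo : Summable (fun k => g (2 * k + 1)) :=
        hsg.comp_injective (fun i j h => by omega)
      rw [← tsum_even_add_odd hge hgo, ← Summable.tsum_add hge hgo]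
      apply tsum_nonpos
      intro k
      have hg1 : g (2 * k) = -c (2 * k + 1) := hfo k
      have hg2 : g (2 * k + 1) = c (2 * k + 2) := by
        have : (2 : ℕ) * k + 1 + 1 = 2 * (k + 1) := by omega
        simp only [hg, this, hfe]
      have := hc_anti (2 * k + 1) (2 * k + 2) (by omega)
      rw [hg1, hg2]
      linarith
    rw [h0, hf0]
    linarith
  have hr : 0 < r := ha.trans har
  have he0 : e 0 = erfc ((r - a) / s) := by simp [he]
  refine ⟨hsum_abs, hS_nonneg, by rw [← he0]; exact hS_le, ?_, ?_⟩
  · exact mul_le_mul_of_nonneg_left (by rw [← he0]; exact hS_le) (by positivity)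
  · rcases eq_or_lt_of_le (mul_nonneg (by positivity : (0:ℝ) ≤ a / r) (erfc_nonneg ((r - a) / s))) with h | h
    · rw [← h, div_zero]; norm_num
    · rw [div_le_iff₀ h]
      have h1 : a / r * (∑' n, f n) ≤ a / r * erfc ((r - a) / s) :=
        mul_le_mul_of_nonneg_left (by rw [← he0]; exact hS_le) (by positivity)
      nlinarith [mul_nonneg (by positivity : (0:ℝ) ≤ a / r) hS_nonneg]
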